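/- Let (Σ_+, Σ_-, Ω) be a solution of the Bianchi I system Σ_+' = -(2-q)Σ_+, Σ_-' = -(2-q)Σ_-, Ω' = 2(q - q*)Ω with constraint Σ_+^2 + Σ_-^2 + Ω = 1, q = 2(Σ_+^2 + Σ_-^2) + q*Ω, γ ∈ (2/3, 2). If (Σ_+, Σ_-)(0) = (σ_+, σ_-) ≠ (0,0), then the ratio Σ_+/Σ_- is conserved wherever defined, and as τ → -∞ the solution converges to the Kasner point (σ_+, σ_-, 0)/√(σ_+^2 + σ_-^2). -/

import Mathlib

open Real Filter

/-- Solution formula for a scalar linear ODE `x' = g x`, given an antiderivative `G` of `g`. -/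
lemma lin_ode_sol (g G x : ℝ → ℝ) (hG : ∀ t, HasDerivAt G (g t) t)
    (hx : ∀ t, HasDerivAt x (g t * x t) t) (t : ℝ) :
    x t = x 0 * Real.exp (G t - G 0) := by
  have hd : ∀ s, HasDerivAt (fun s => x s * Real.exp (-G s)) 0 s := by
    intro s
    have h1 : HasDerivAt (fun s => x s * Real.exp (-G s)) (g s * x s * Real.exp (-G s) + x s * (Real.exp (-G s) * -g s)) s := (hx s).mul (((hG s).neg).exp)
    convert h1 using 1
    ring
  have key : x t * Real.exp (-G t) = x 0 * Real.exp (-G 0) :=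
    is_const_of_deriv_eq_zero (fun s => (hd s).differentiableAt)
      (fun s => (hd s).deriv) t 0
  have h2 : x t = (x t * Real.exp (-G t)) * Real.exp (G t) := by
    rw [mul_assoc, ← Real.exp_add]; simp
  rw [h2, key, Real.exp_sub, Real.exp_neg]
  field_simp [Real.exp_ne_zero]

/-- For Bianchi I solutions with nonzero initial shear, the ratio Σ₊/Σ₋ is
conserved wherever defined, and as τ → -∞ the solution converges to the Kasner
point (σ₊, σ₋, 0)/√(σ₊² + σ₋²). -/
theorem bianchiI_past_asymptotics
    (γ : ℝ) (hγ : γ ∈ Set.Ioo (2/3 : ℝ) 2)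
    (qs : ℝ) (hqs : qs = (3 * γ - 2) / 2)
    (Sp Sm Om : ℝ → ℝ)
    (q : ℝ → ℝ) (hq : ∀ τ, q τ = 2 * (Sp τ ^ 2 + Sm τ ^ 2) + qs * Om τ)
    (hSp : ∀ τ, HasDerivAt Sp (-(2 - q τ) * Sp τ) τ)
    (hSm : ∀ τ, HasDerivAt Sm (-(2 - q τ) * Sm τ) τ)
    (hOm : ∀ τ, HasDerivAt Om (2 * (q τ - qs) * Om τ) τ)
    (hcon : ∀ τ, Sp τ ^ 2 + Sm τ ^ 2 + Om τ = 1)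
    (hOmpos : ∀ τ, 0 ≤ Om τ)
    (σp σm : ℝ) (hinit : Sp 0 = σp ∧ Sm 0 = σm)
    (hne : (σp, σm) ≠ (0, 0)) :
    (∀ τ σ : ℝ, Sm τ ≠ 0 → Sm σ ≠ 0 → Sp τ / Sm τ = Sp σ / Sm σ) ∧
    Tendsto (fun τ => (Sp τ, Sm τ, Om τ)) atBot
      (nhds (σp / Real.sqrt (σp ^ 2 + σm ^ 2),
             σm / Real.sqrt (σp ^ 2 + σm ^ 2), 0)) := by
  have hs0 : 0 < σp ^ 2 + σm ^ 2 := by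
    have h : σp ≠ 0 ∨ σm ≠ 0 := by
      by_contra h
      push_neg at h
      exact hne (by simp [h.1, h.2])
    rcases h with h | h
    · positivity
    · positivity
  set s0 : ℝ := σp ^ 2 + σm ^ 2 with hs0def
  have hqs2 : qs < 2 := by rw [hqs]; linarith [hγ.2]
  set c : ℝ := 2 * (2 - qs) with hcdef
  have hc : 0 < c := by rw [hcdef]; linarith
  -- continuity of Om
  have hOmc : Continuous Om := by
    rw [continuous_iff_continuousAt]
    exact fun τ => (hOm τ).differentiableAt.continuousAt
  -- f = q - 2 expressed via Om
  have hq2 : ∀ τ, q τ - 2 = -((2 - qs) * Om τ) := by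
    intro τ
    have := hcon τ
    rw [hq τ]; nlinarith
  set f : ℝ → ℝ := fun τ => -((2 - qs) * Om τ) with hfdef
  have hfc : Continuous f := (continuous_const.mul hOmc).neg
  set F : ℝ → ℝ := fun τ => ∫ s in (0:ℝ)..τ, f s with hFdef
  have hF : ∀ τ, HasDerivAt F (f τ) τ := fun τ =>
    (hfc.integral_hasStrictDerivAt 0 τ).hasDerivAt
  have hF0 : F 0 = 0 := intervalIntegral.integral_same
  -- Sp and Sm formulas
  have hfe : ∀ t, -(2 - q t) = f t := by
    intro t; show -(2 - q t) = -((2 - qs) * Om t); linarith [hq2 t]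
  have hSpf : ∀ τ, Sp τ = σp * Real.exp (F τ) := by
    intro τ
    have := lin_ode_sol f F Sp hF (fun t => (hfe t) ▸ hSp t) τ
    rwa [hF0, sub_zero, hinit.1] at this
  have hSmf : ∀ τ, Sm τ = σm * Real.exp (F τ) := by
    intro τ
    have := lin_ode_sol f F Sm hF (fun t => (hfe t) ▸ hSm t) τ
    rwa [hF0, sub_zero, hinit.2] at this
  -- Om formula
  set g : ℝ → ℝ := fun τ => 2 * (f τ + 2 - qs) with hgdef
  have hge : ∀ t, 2 * (q t - qs) = g t := by
    intro t; show 2 * (q t - qs) = 2 * (f t + 2 - qs)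
    have := hq2 t
    show 2 * (q t - qs) = 2 * (-((2 - qs) * Om t) + 2 - qs)
    linarith
  have hgc : Continuous g := continuous_const.mul ((hfc.add continuous_const).sub continuous_const)
  set G : ℝ → ℝ := fun τ => ∫ s in (0:ℝ)..τ, g s with hGdef
  have hG : ∀ τ, HasDerivAt G (g τ) τ := fun τ =>
    (hgc.integral_hasStrictDerivAt 0 τ).hasDerivAt
  have hG0 : G 0 = 0 := intervalIntegral.integral_same
  have hOmf : ∀ τ, Om τ = Om 0 * Real.exp (G τ) := by
    intro τ
    have := lin_ode_sol g G Om hG (fun t => (hge t) ▸ hOm t) τ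
    rwa [hG0, sub_zero] at this
  -- G = 2F + cτ
  have hH : ∀ τ, G τ = 2 * F τ + c * τ := by
    have hd : ∀ t, HasDerivAt (fun t => G t - 2 * F t - c * t) 0 t := by
      intro t
      have h1 : HasDerivAt (fun t => G t - 2 * F t - c * t) (g t - 2 * f t - c * 1) t := ((hG t).sub ((hF t).const_mul 2)).sub ((hasDerivAt_id t).const_mul c)
      convert h1 using 1
      show (0:ℝ) = 2 * (f t + 2 - qs) - 2 * f t - 2 * (2 - qs) * 1
      ring
    intro τ
    have := is_const_of_deriv_eq_zero (fun s => (hd s).differentiableAt)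
      (fun s => (hd s).deriv) τ 0
    simp only [hG0, hF0, mul_zero, sub_zero] at this
    linarith
  -- constraint in explicit form
  have hD : ∀ τ, 0 < s0 + Om 0 * Real.exp (c * τ) := fun τ =>
    add_pos_of_pos_of_nonneg hs0 (mul_nonneg (hOmpos 0) (Real.exp_pos _).le)
  have hE2 : ∀ τ, Real.exp (F τ) ^ 2 * (s0 + Om 0 * Real.exp (c * τ)) = 1 := by
    intro τ
    have h1 := hcon τ
    rw [hSpf τ, hSmf τ, hOmf τ, hH τ, Real.exp_add, two_mul, Real.exp_add, ← sq] at h1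
    rw [hs0def]
    linear_combination h1
  have hE2' : ∀ τ, Real.exp (F τ) ^ 2 = (s0 + Om 0 * Real.exp (c * τ))⁻¹ := fun τ =>
    eq_inv_of_mul_eq_one_left (by linear_combination hE2 τ)
  have hEF : ∀ τ, Real.exp (F τ) = Real.sqrt ((s0 + Om 0 * Real.exp (c * τ))⁻¹) := by
    intro τ
    rw [← hE2' τ, Real.sqrt_sq (Real.exp_pos _).le]
  -- limits
  have h1 : Tendsto (fun τ : ℝ => c * τ) atBot atBot := by
    exact Tendsto.const_mul_atBot hc tendsto_id
  have h2 : Tendsto (fun τ : ℝ => Real.exp (c * τ)) atBot (nhds 0) :=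
    Real.tendsto_exp_atBot.comp h1
  have hDt : Tendsto (fun τ => s0 + Om 0 * Real.exp (c * τ)) atBot (nhds s0) := by
    have hm : Tendsto (fun τ : ℝ => Om 0 * Real.exp (c * τ)) atBot (nhds (Om 0 * 0)) :=
      tendsto_const_nhds.mul h2
    have := (tendsto_const_nhds (x := s0)).add hm
    simpa using this
  have hEt : Tendsto (fun τ => Real.exp (F τ)) atBot (nhds (Real.sqrt s0)⁻¹) := by
    have h3 : Tendsto (fun τ => Real.sqrt ((s0 + Om 0 * Real.exp (c * τ))⁻¹)) atBot
        (nhds (Real.sqrt s0⁻¹)) :=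
      (Real.continuous_sqrt.continuousAt.tendsto).comp (hDt.inv₀ hs0.ne')
    rw [Real.sqrt_inv] at h3
    exact h3.congr (fun τ => (hEF τ).symm)
  have hsq : (Real.sqrt s0)⁻¹ ^ 2 = s0⁻¹ := by
    rw [inv_pow, Real.sq_sqrt hs0.le]
  have hSpt : Tendsto Sp atBot (nhds (σp / Real.sqrt s0)) := by
    have h := (tendsto_const_nhds (x := σp)).mul hEt
    rw [div_eq_mul_inv]
    exact h.congr (fun τ => (hSpf τ).symm)
  have hSmt : Tendsto Sm atBot (nhds (σm / Real.sqrt s0)) := by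
    have h := (tendsto_const_nhds (x := σm)).mul hEt
    rw [div_eq_mul_inv]
    exact h.congr (fun τ => (hSmf τ).symm)
  have hOmt : Tendsto Om atBot (nhds 0) := by
    have hm : Tendsto (fun τ => s0 * Real.exp (F τ) ^ 2) atBot
        (nhds (s0 * (Real.sqrt s0)⁻¹ ^ 2)) := tendsto_const_nhds.mul (hEt.pow 2)
    have h4 := (tendsto_const_nhds (x := (1:ℝ))).sub hm
    rw [hsq, mul_inv_cancel₀ hs0.ne', sub_self] at h4
    refine h4.congr (fun τ => ?_)
    have h5 := hcon τ
    rw [hSpf τ, hSmf τ] at h5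
    rw [hs0def]
    nlinarith [h5]
  constructor
  · intro τ σ hτ hσ
    have hσm : σm ≠ 0 := by
      intro h; exact hτ (by rw [hSmf τ, h, zero_mul])
    rw [hSpf τ, hSmf τ, hSpf σ, hSmf σ,
      mul_div_mul_right _ _ (Real.exp_ne_zero _),
      mul_div_mul_right _ _ (Real.exp_ne_zero _)]
  · exact hSpt.prodMk_nhds (hSmt.prodMk_nhds hOmt)
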